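/- Let 0 < ε0 < ε1 < π/2 and L̄ > 0. There exists a constant C > 0 such that for all nonzero complex z with |arg(z)| < ε0 and all μ with μ = 0 or |arg(μ)| < π − ε1 (and z + μ ≠ 0), one has | (1 − e^{−L̄·√(z+μ)}) / ( √(z+μ) · (1 + e^{−L̄·√(z+μ)}) ) | ≤ C / |z|^{1/2}. -/

import Mathlib

open Complex Real

lemma sin_abs_of_abs_le_pi {t : ℝ} (h : |t| ≤ π) : Real.sin |t| = |Real.sin t| := by
  rcases abs_cases t with ⟨h1, h2⟩ | ⟨h1, h2⟩
  · rw [h1, _root_.abs_of_nonneg (Real.sin_nonneg_of_nonneg_of_le_pi h2 (h1 ▸ h))]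
  · rw [h1, Real.sin_neg]
    rw [_root_.abs_of_nonpos]
    have h3 : 0 ≤ -t := by linarith
    have := Real.sin_nonneg_of_nonneg_of_le_pi h3 (h1 ▸ h)
    rw [Real.sin_neg] at this; linarith

lemma cos_le_cos_abs_le {a t : ℝ} (ha' : a ≤ π) (ht : |t| ≤ a) :
    Real.cos a ≤ Real.cos t := by
  rw [← Real.cos_abs t]
  exact Real.cos_le_cos_of_nonneg_of_le_pi (abs_nonneg t) ha' ht

lemma neg_le_of_sq_le_sq' {a b : ℝ} (h : a^2 ≤ b^2) (hb : 0 ≤ b) : -b ≤ a := by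
  nlinarith [sq_nonneg (a+b), sq_nonneg (a-b)]

lemma le_of_sq_le_sq'' {a b : ℝ} (h : a^2 ≤ b^2) (hb : 0 ≤ b) : a ≤ b := by
  nlinarith [sq_nonneg (a+b), sq_nonneg (a-b)]

lemma lemA (ε₀ ε₁ : ℝ) (h₀ : 0 < ε₀) (h₀₁ : ε₀ < ε₁) (h₁ : ε₁ < Real.pi/2)
    (z μ : ℂ) (hz : z ≠ 0) (hza : |Complex.arg z| < ε₀)
    (hμ : μ = 0 ∨ |Complex.arg μ| < Real.pi - ε₁) :
    -(Real.cos ε₁) * ‖(z+μ)‖ ≤ (z+μ).re := by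
  have hπ := Real.pi_pos
  have hcos1 : 0 < Real.cos ε₁ := Real.cos_pos_of_mem_Ioo ⟨by linarith, h₁⟩
  by_cases hre : 0 ≤ (z+μ).re
  · nlinarith [norm_nonneg (z+μ)]
  push_neg at hre
  have hzabs : 0 < ‖z‖ := norm_pos_iff.mpr hz
  have hzre : z.re = ‖z‖ * Real.cos (Complex.arg z) := by
    rw [Complex.cos_arg hz]; field_simp
  have hzim : z.im = ‖z‖ * Real.sin (Complex.arg z) := by
    rw [Complex.sin_arg]; field_simp
  have hcz : Real.cos ε₀ ≤ Real.cos (Complex.arg z) :=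
    cos_le_cos_abs_le (by linarith) hza.le
  have hzre' : ‖z‖ * Real.cos ε₀ ≤ z.re := by
    rw [hzre]; nlinarith
  have hcos0 : 0 < Real.cos ε₀ := Real.cos_pos_of_mem_Ioo ⟨by linarith, by linarith⟩
  have hzrepos : 0 < z.re := by nlinarith
  have hzim' : |z.im| ≤ ‖z‖ * Real.sin ε₀ := by
    rw [hzim, abs_mul, _root_.abs_of_nonneg hzabs.le]
    have h1 : |Real.sin (Complex.arg z)| = Real.sin |Complex.arg z| :=
      (sin_abs_of_abs_le_pi (by linarith)).symm
    rw [h1]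
    have : Real.sin |Complex.arg z| ≤ Real.sin ε₀ :=
      Real.sin_le_sin_of_le_of_le_pi_div_two (by linarith [abs_nonneg (Complex.arg z)])
        (by linarith) hza.le
    nlinarith
  rcases hμ with hμ0 | hμa
  · exfalso; rw [hμ0] at hre; simp at hre; linarith
  have hμ0 : μ ≠ 0 := by
    intro h; rw [h] at hre; simp at hre; linarith
  have hμabs : 0 < ‖μ‖ := norm_pos_iff.mpr hμ0
  have hμre : μ.re = ‖μ‖ * Real.cos (Complex.arg μ) := by
    rw [Complex.cos_arg hμ0]; field_simp
  have hμim : μ.im = ‖μ‖ * Real.sin (Complex.arg μ) := by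
    rw [Complex.sin_arg]; field_simp
  have hμrelt : μ.re < 0 := by
    have hh : (z+μ).re = z.re + μ.re := by simp
    rw [hh] at hre; linarith
  have hcμ : Real.cos (Real.pi - ε₁) ≤ Real.cos (Complex.arg μ) :=
    cos_le_cos_abs_le (by linarith) hμa.le
  have hμre' : -(‖μ‖ * Real.cos ε₁) ≤ μ.re := by
    rw [hμre]
    rw [Real.cos_pi_sub] at hcμ
    nlinarith
  have hcosargμ : Real.cos (Complex.arg μ) < 0 := by
    rw [hμre] at hμrelt; nlinarith
  have hargμgt : Real.pi/2 < |Complex.arg μ| := by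
    by_contra h
    push_neg at h
    have : 0 ≤ Real.cos |Complex.arg μ| :=
      Real.cos_nonneg_of_mem_Icc ⟨by linarith [abs_nonneg (Complex.arg μ)], h⟩
    rw [Real.cos_abs] at this; linarith
  have hsinμ : ‖μ‖ * Real.sin ε₁ ≤ |μ.im| := by
    rw [hμim, abs_mul, _root_.abs_of_nonneg hμabs.le]
    have h1 : |Real.sin (Complex.arg μ)| = Real.sin |Complex.arg μ| :=
      (sin_abs_of_abs_le_pi (by linarith)).symm
    rw [h1]
    have h2 : Real.sin |Complex.arg μ| = Real.sin (Real.pi - |Complex.arg μ|) :=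
      (Real.sin_pi_sub _).symm
    rw [h2]
    have : Real.sin ε₁ ≤ Real.sin (Real.pi - |Complex.arg μ|) :=
      Real.sin_le_sin_of_le_of_le_pi_div_two (by linarith) (by linarith) (by linarith)
    nlinarith
  have hsin1 : 0 < Real.sin ε₁ := Real.sin_pos_of_pos_of_lt_pi (by linarith) (by linarith)
  have hsin0 : 0 ≤ Real.sin ε₀ := Real.sin_nonneg_of_nonneg_of_le_pi h₀.le (by linarith)
  have hsinsub : 0 ≤ Real.sin (ε₁ - ε₀) :=
    Real.sin_nonneg_of_nonneg_of_le_pi (by linarith) (by linarith)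
  rw [Real.sin_sub] at hsinsub
  have hxre : (z+μ).re = z.re + μ.re := by simp
  have hxim : (z+μ).im = z.im + μ.im := by simp
  have h1 : -(z+μ).re ≤ ‖μ‖ * Real.cos ε₁ - ‖z‖ * Real.cos ε₀ := by
    rw [hxre]; linarith
  have h2 : ‖μ‖ * Real.sin ε₁ - ‖z‖ * Real.sin ε₀ ≤ |(z+μ).im| := by
    rw [hxim]
    have h5 := abs_sub_abs_le_abs_sub μ.im (-z.im)
    simp only [sub_neg_eq_add, abs_neg] at h5
    have h6 : |μ.im + z.im| = |z.im + μ.im| := by rw [add_comm]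
    rw [h6] at h5
    linarith
  have h3 : Real.sin ε₁ * (‖μ‖ * Real.cos ε₁ - ‖z‖ * Real.cos ε₀) ≤
      Real.cos ε₁ * (‖μ‖ * Real.sin ε₁ - ‖z‖ * Real.sin ε₀) := by
    linarith [mul_nonneg hzabs.le hsinsub]
  have key : Real.sin ε₁ * (-(z+μ).re) ≤ Real.cos ε₁ * |(z+μ).im| := by
    calc Real.sin ε₁ * (-(z+μ).re)
        ≤ Real.sin ε₁ * (‖μ‖ * Real.cos ε₁ - ‖z‖ * Real.cos ε₀) :=
          mul_le_mul_of_nonneg_left h1 hsin1.le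
      _ ≤ Real.cos ε₁ * (‖μ‖ * Real.sin ε₁ - ‖z‖ * Real.sin ε₀) := h3
      _ ≤ Real.cos ε₁ * |(z+μ).im| := mul_le_mul_of_nonneg_left h2 hcos1.le
  have hsq : ‖(z+μ)‖ ^ 2 = (z+μ).re^2 + (z+μ).im^2 := by
    rw [Complex.sq_norm, Complex.normSq_apply]; ring
  have hpyth := Real.sin_sq_add_cos_sq ε₁
  have hnre : 0 ≤ -(z+μ).re := by linarith
  have key2 : (Real.sin ε₁ * (-(z+μ).re))^2 ≤ (Real.cos ε₁ * |(z+μ).im|)^2 :=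
    pow_le_pow_left₀ (mul_nonneg hsin1.le hnre) key 2
  have key2' : (Real.sin ε₁)^2 * (z+μ).re^2 ≤ (Real.cos ε₁)^2 * (z+μ).im^2 := by
    have h8 : (Real.sin ε₁)^2*(z+μ).re^2 = (Real.sin ε₁ * (-(z+μ).re))^2 := by ring
    have h9 : (Real.cos ε₁ * |(z+μ).im|)^2 = (Real.cos ε₁)^2*(z+μ).im^2 := by
      rw [mul_pow, _root_.sq_abs]
    rw [h8, ← h9]; exact key2
  have e1 : (Real.cos ε₁)^2 * ‖(z+μ)‖^2 =
      (Real.cos ε₁)^2*(z+μ).re^2 + (Real.cos ε₁)^2*(z+μ).im^2 := by rw [hsq]; ring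
  have e2 : (z+μ).re^2 = (Real.sin ε₁)^2*(z+μ).re^2 + (Real.cos ε₁)^2*(z+μ).re^2 := by
    linear_combination (z+μ).re^2 * hpyth.symm
  have key3 : (z+μ).re^2 ≤ (Real.cos ε₁)^2 * ‖(z+μ)‖^2 := by linarith
  have key4 : (z+μ).re^2 ≤ (Real.cos ε₁ * ‖(z+μ)‖)^2 := by
    rw [mul_pow]; exact key3
  have := neg_le_of_sq_le_sq' key4 (mul_nonneg hcos1.le (norm_nonneg (z+μ)))
  linarith

lemma lemB (ε₀ ε₁ : ℝ) (h₀ : 0 < ε₀) (h₀₁ : ε₀ < ε₁) (h₁ : ε₁ < Real.pi/2)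
    (z μ : ℂ) (hz : z ≠ 0) (hza : |Complex.arg z| < ε₀)
    (hμ : μ = 0 ∨ |Complex.arg μ| < Real.pi - ε₁) :
    Real.sin (ε₁ - ε₀) * ‖z‖ ≤ ‖(z + μ)‖ := by
  have hπ := Real.pi_pos
  have hsinβ : 0 ≤ Real.sin (ε₁ - ε₀) :=
    Real.sin_nonneg_of_nonneg_of_le_pi (by linarith) (by linarith)
  have hk1 : Real.sin (ε₁ - ε₀) ≤ 1 := Real.sin_le_one _
  by_cases hμ0 : μ = 0
  · subst hμ0
    simp only [add_zero]
    nlinarith [norm_nonneg z]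
  rcases hμ with h | hμa
  · exact absurd h hμ0
  have hzabs : 0 < ‖z‖ := norm_pos_iff.mpr hz
  have hμabs : 0 < ‖μ‖ := norm_pos_iff.mpr hμ0
  have hzre : z.re = ‖z‖ * Real.cos (Complex.arg z) := by
    rw [Complex.cos_arg hz]; field_simp
  have hzim : z.im = ‖z‖ * Real.sin (Complex.arg z) := by
    rw [Complex.sin_arg]; field_simp
  have hμre : μ.re = ‖μ‖ * Real.cos (Complex.arg μ) := by
    rw [Complex.cos_arg hμ0]; field_simp
  have hμim : μ.im = ‖μ‖ * Real.sin (Complex.arg μ) := by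
    rw [Complex.sin_arg]; field_simp
  set θ := Complex.arg z
  set φ := Complex.arg μ
  have hdot : z.re * μ.re + z.im * μ.im =
      ‖z‖ * ‖μ‖ * Real.cos (θ - φ) := by
    rw [hzre, hzim, hμre, hμim, Real.cos_sub]; ring
  have habsd : |θ - φ| ≤ Real.pi - (ε₁ - ε₀) := by
    calc |θ - φ| ≤ |θ| + |φ| := abs_sub θ φ
      _ ≤ Real.pi - (ε₁ - ε₀) := by linarith [hza.le, hμa.le]
  have hcosd : -(Real.cos (ε₁ - ε₀)) ≤ Real.cos (θ - φ) := by
    have := cos_le_cos_abs_le (a := Real.pi - (ε₁ - ε₀)) (by linarith) habsd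
    rwa [Real.cos_pi_sub] at this
  have hsq : ‖(z+μ)‖^2 =
      ‖z‖^2 + ‖μ‖^2 + 2*(z.re * μ.re + z.im * μ.im) := by
    rw [Complex.sq_norm, Complex.sq_norm, Complex.sq_norm,
      Complex.normSq_apply, Complex.normSq_apply, Complex.normSq_apply]
    simp only [Complex.add_re, Complex.add_im]
    ring
  have hpyth := Real.sin_sq_add_cos_sq (ε₁ - ε₀)
  have key : (Real.sin (ε₁ - ε₀) * ‖z‖)^2 ≤ ‖(z+μ)‖^2 := by
    rw [hsq, hdot]
    nlinarith [sq_nonneg (‖μ‖ - Real.cos (ε₁ - ε₀) * ‖z‖),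
      mul_nonneg hzabs.le hμabs.le]
  exact le_of_sq_le_sq'' key (norm_nonneg _)

lemma cos_half_sq (t : ℝ) : Real.cos (t/2)^2 = (1 + Real.cos t)/2 := by
  have := Real.cos_sq (t/2)
  rw [this, mul_div_cancel₀ t (two_ne_zero)]
  ring

lemma lemC (x : ℂ) (hx : x ≠ 0) :
    ‖(x ^ ((1:ℂ)/2))‖ = ‖x‖ ^ ((1:ℝ)/2) ∧
    (x ^ ((1:ℂ)/2)).re = ‖x‖ ^ ((1:ℝ)/2) * Real.cos (Complex.arg x / 2) := by
  rw [Complex.cpow_def_of_ne_zero hx]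
  have hre : (Complex.log x * (1/2)).re = Real.log (‖x‖) / 2 := by
    simp [Complex.mul_re, Complex.log_re, Complex.log_im]
    ring
  have him : (Complex.log x * (1/2)).im = Complex.arg x / 2 := by
    simp [Complex.mul_im, Complex.log_re, Complex.log_im]
    ring
  have habs : Real.exp (Real.log (‖x‖) / 2) = ‖x‖ ^ ((1:ℝ)/2) := by
    rw [Real.rpow_def_of_pos (norm_pos_iff.mpr hx)]
    ring_nf
  constructor
  · rw [Complex.norm_exp, hre, habs]
  · rw [Complex.exp_re, hre, him, habs]

lemma lemD (c : ℝ) (w : ℂ) (hc : 0 < c) (hwre : c * ‖w‖ ≤ w.re) :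
    1 - Real.exp (-(c * (Real.pi/2))) ≤ ‖(1 + Complex.exp (-w))‖ := by
  have hwre0 : 0 ≤ w.re := le_trans (mul_nonneg hc.le (norm_nonneg w)) hwre
  have hE : ‖(Complex.exp (-w))‖ = Real.exp (-w.re) := by
    rw [Complex.norm_exp]; simp
  by_cases h : c * (Real.pi/2) ≤ w.re
  · have h1 : Real.exp (-w.re) ≤ Real.exp (-(c*(Real.pi/2))) :=
      Real.exp_le_exp.mpr (by linarith)
    have h3 : (1:ℝ) ≤ ‖(1 + Complex.exp (-w))‖ + ‖(Complex.exp (-w))‖ := by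
      have := norm_add_le (1 + Complex.exp (-w)) (-(Complex.exp (-w)))
      simpa using this
    linarith
  · push_neg at h
    have him : |w.im| < Real.pi/2 := by
      have h4 : c * |w.im| ≤ c * ‖w‖ :=
        mul_le_mul_of_nonneg_left (Complex.abs_im_le_norm w) hc.le
      have h5 : c * |w.im| < c * (Real.pi/2) := by linarith
      exact lt_of_mul_lt_mul_left h5 hc.le
    obtain ⟨him1, him2⟩ := abs_lt.mp him
    have hcos : 0 < Real.cos w.im := Real.cos_pos_of_mem_Ioo ⟨him1, him2⟩
    have hre : 1 ≤ (1 + Complex.exp (-w)).re := by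
      simp only [Complex.add_re, Complex.one_re]
      have h5 : (Complex.exp (-w)).re = Real.exp ((-w).re) * Real.cos ((-w).im) :=
        Complex.exp_re _
      rw [h5]
      simp only [Complex.neg_re, Complex.neg_im, Real.cos_neg]
      nlinarith [Real.exp_pos (-w.re), hcos]
    calc 1 - Real.exp (-(c * (Real.pi/2))) ≤ 1 := by
          linarith [Real.exp_pos (-(c*(Real.pi/2)))]
      _ ≤ (1 + Complex.exp (-w)).re := hre
      _ ≤ ‖(1 + Complex.exp (-w))‖ := Complex.re_le_norm _

theorem exists_bound_ratio (ε₀ ε₁ : ℝ) (h₀ : 0 < ε₀) (h₀₁ : ε₀ < ε₁)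
    (h₁ : ε₁ < Real.pi / 2) (L : ℝ) (hL : 0 < L) :
    ∃ C : ℝ, 0 < C ∧ ∀ z μ : ℂ, z ≠ 0 → |Complex.arg z| < ε₀ →
      (μ = 0 ∨ |Complex.arg μ| < Real.pi - ε₁) → z + μ ≠ 0 →
      ‖(1 - Complex.exp (-((L : ℂ) * (z + μ) ^ ((1 : ℂ) / 2)))) /
          ((z + μ) ^ ((1 : ℂ) / 2) *
            (1 + Complex.exp (-((L : ℂ) * (z + μ) ^ ((1 : ℂ) / 2)))))‖ ≤
        C / ‖z‖ ^ ((1 : ℝ) / 2) := by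
  have hπ := Real.pi_pos
  set c : ℝ := Real.sqrt ((1 - Real.cos ε₁)/2) with hc_def
  have hcos1lt : Real.cos ε₁ < 1 := by
    have h := Real.cos_lt_cos_of_nonneg_of_le_pi (le_refl (0:ℝ))
      (show ε₁ ≤ Real.pi by linarith) (show (0:ℝ) < ε₁ by linarith)
    simpa using h
  have hc : 0 < c := Real.sqrt_pos.mpr (by linarith)
  set m : ℝ := 1 - Real.exp (-(c * (Real.pi/2))) with hm_def
  have hm : 0 < m := by
    have : Real.exp (-(c * (Real.pi/2))) < 1 := Real.exp_lt_one_iff.mpr (by nlinarith)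
    simp only [hm_def]; linarith
  set k : ℝ := Real.sin (ε₁ - ε₀) with hk_def
  have hk : 0 < k := Real.sin_pos_of_pos_of_lt_pi (by linarith) (by linarith)
  have hkh : 0 < k ^ ((1:ℝ)/2) := Real.rpow_pos_of_pos hk _
  refine ⟨2 / (m * k ^ ((1:ℝ)/2)), by positivity, ?_⟩
  intro z μ hz hza hμ hx
  have hxabs : 0 < ‖(z + μ)‖ := norm_pos_iff.mpr hx
  have hzabs : 0 < ‖z‖ := norm_pos_iff.mpr hz
  have hA := lemA ε₀ ε₁ h₀ h₀₁ h₁ z μ hz hza hμ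
  have hB := lemB ε₀ ε₁ h₀ h₀₁ h₁ z μ hz hza hμ
  obtain ⟨hsabs, hsre⟩ := lemC (z + μ) hx
  set s : ℂ := (z + μ) ^ ((1:ℂ)/2) with hs_def
  set X : ℝ := ‖(z + μ)‖ with hX_def
  have hargle : |Complex.arg (z + μ)| ≤ Real.pi := Complex.abs_arg_le_pi _
  have hcoshalf_nonneg : 0 ≤ Real.cos (Complex.arg (z + μ) / 2) := by
    apply Real.cos_nonneg_of_mem_Icc
    constructor
    · have := (abs_le.mp hargle).1; linarith
    · have := (abs_le.mp hargle).2; linarith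
  have hcosarg : Real.cos (Complex.arg (z + μ)) = (z + μ).re / X := Complex.cos_arg hx
  have hch : Real.cos (Complex.arg (z + μ) / 2)^2 = (1 + (z + μ).re / X)/2 := by
    rw [cos_half_sq, hcosarg]
  have hratio : -(Real.cos ε₁) ≤ (z + μ).re / X := by
    rw [le_div_iff₀ hxabs]
    linarith [hA]
  have hcoshalf : c ≤ Real.cos (Complex.arg (z + μ) / 2) := by
    have h6 : (1 - Real.cos ε₁)/2 ≤ Real.cos (Complex.arg (z + μ) / 2)^2 := by
      rw [hch]; linarith
    calc c ≤ Real.sqrt (Real.cos (Complex.arg (z + μ) / 2)^2) := Real.sqrt_le_sqrt h6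
      _ = Real.cos (Complex.arg (z + μ) / 2) := Real.sqrt_sq hcoshalf_nonneg
  have hXh : 0 < X ^ ((1:ℝ)/2) := Real.rpow_pos_of_pos hxabs _
  have hsre' : c * ‖s‖ ≤ s.re := by
    rw [hsabs, hsre]
    nlinarith [hXh, hcoshalf, hc]
  set w : ℂ := (L:ℂ) * s with hw_def
  have hwre : w.re = L * s.re := by
    simp [hw_def, Complex.mul_re]
  have hwabs : ‖w‖ = L * ‖s‖ := by
    simp [hw_def, norm_mul, Complex.norm_real, abs_of_pos hL]
  have hwre' : c * ‖w‖ ≤ w.re := by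
    rw [hwre, hwabs]
    nlinarith [hsre', hL]
  have hden := lemD c w hc hwre'
  have hwre0 : 0 ≤ w.re := le_trans (mul_nonneg hc.le (norm_nonneg w)) hwre'
  have hnum : ‖(1 - Complex.exp (-w))‖ ≤ 2 := by
    have h7 := norm_sub_le (1 : ℂ) (Complex.exp (-w))
    have h8 : ‖(Complex.exp (-w))‖ = Real.exp (-w.re) := by
      rw [Complex.norm_exp]; simp
    have h9 : Real.exp (-w.re) ≤ 1 := Real.exp_le_one_iff.mpr (by linarith)
    simp only [norm_one] at h7
    linarith
  have hkz : k ^ ((1:ℝ)/2) * ‖z‖ ^ ((1:ℝ)/2) ≤ ‖s‖ := by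
    rw [hsabs]
    have h10 : (k * ‖z‖) ^ ((1:ℝ)/2) ≤ X ^ ((1:ℝ)/2) :=
      Real.rpow_le_rpow (by positivity) hB (by norm_num)
    rwa [Real.mul_rpow hk.le hzabs.le] at h10
  have hzh : 0 < ‖z‖ ^ ((1:ℝ)/2) := Real.rpow_pos_of_pos hzabs _
  have hdle : k ^ ((1:ℝ)/2) * ‖z‖ ^ ((1:ℝ)/2) * m ≤
      ‖s‖ * ‖(1 + Complex.exp (-w))‖ :=
    mul_le_mul hkz hden hm.le (norm_nonneg s)
  calc ‖((1 - Complex.exp (-w)) / (s * (1 + Complex.exp (-w))))‖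
      = ‖(1 - Complex.exp (-w))‖ /
        (‖s‖ * ‖(1 + Complex.exp (-w))‖) := by
        rw [norm_div, norm_mul]
    _ ≤ 2 / (k ^ ((1:ℝ)/2) * ‖z‖ ^ ((1:ℝ)/2) * m) :=
        div_le_div₀ (by norm_num) hnum (by positivity) hdle
    _ = 2 / (m * k ^ ((1:ℝ)/2)) / ‖z‖ ^ ((1:ℝ)/2) := by
        rw [div_div]; congr 1; ring
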